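/- Let H be a complex Hilbert space and let P, Q, A be bounded operators on H such that P and Q are positive and for all x, y ∈ H one has |⟪x, A y⟫|² ≤ re⟪x, P x⟫ · re⟪y, Q y⟫. Then: (1) A*A ≤ ‖P‖ • Q in the Loewner order; (2) A A* ≤ ‖Q‖ • P in the Loewner order; (3) ‖A‖² ≤ ‖P‖ · ‖Q‖. -/

import Mathlib

open scoped InnerProductSpace ComplexConjugate

section aux
variable {H : Type*} [NormedAddCommGroup H] [InnerProductSpace ℂ H]

lemma aux_re_le (T : H →L[ℂ] H) (x : H) : (⟪x, T x⟫_ℂ).re ≤ ‖T‖ * ‖x‖ ^ 2 := by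
  calc (⟪x, T x⟫_ℂ).re ≤ ‖⟪x, T x⟫_ℂ‖ := Complex.re_le_norm _
    _ ≤ ‖x‖ * ‖T x‖ := norm_inner_le_norm _ _
    _ ≤ ‖x‖ * (‖T‖ * ‖x‖) := by gcongr; exact T.le_opNorm x
    _ = ‖T‖ * ‖x‖ ^ 2 := by ring

lemma aux_inner_real_smul (r : ℝ) (x y : H) : ⟪r • x, y⟫_ℂ = (r : ℂ) * ⟪x, y⟫_ℂ := by
  rw [RCLike.real_smul_eq_coe_smul (K := ℂ), inner_smul_real_left]
  simp [Complex.real_smul]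

end aux

open scoped InnerProductSpace in
/-- If `P, Q` are positive bounded operators and `A` a bounded operator on a complex
Hilbert space with `|⟪x, A y⟫|² ≤ re⟪x, P x⟫ · re⟪y, Q y⟫` for all `x, y`, then
`A* A ≤ ‖P‖ • Q`, `A A* ≤ ‖Q‖ • P` (Loewner order) and `‖A‖² ≤ ‖P‖ ‖Q‖`. -/
theorem stmt_10 {H : Type*} [NormedAddCommGroup H] [InnerProductSpace ℂ H] [CompleteSpace H]
    (P Q A : H →L[ℂ] H) (hP : P.IsPositive) (hQ : Q.IsPositive)
    (h : ∀ x y : H, ‖⟪x, A y⟫_ℂ‖ ^ 2 ≤ (⟪x, P x⟫_ℂ).re * (⟪y, Q y⟫_ℂ).re) :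
    ContinuousLinearMap.adjoint A * A ≤ ‖P‖ • Q ∧
      A * ContinuousLinearMap.adjoint A ≤ ‖Q‖ • P ∧
      ‖A‖ ^ 2 ≤ ‖P‖ * ‖Q‖ := by
  have hQpos : ∀ y, 0 ≤ (⟪y, Q y⟫_ℂ).re := fun y => hQ.re_inner_nonneg_right y
  have hPpos : ∀ x, 0 ≤ (⟪x, P x⟫_ℂ).re := fun x => hP.re_inner_nonneg_right x
  -- key 1 : ‖A y‖² ≤ ‖P‖ * re⟪y, Q y⟫
  have key1 : ∀ y, ‖A y‖ ^ 2 ≤ ‖P‖ * (⟪y, Q y⟫_ℂ).re := by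
    intro y
    rcases eq_or_ne (A y) 0 with h0 | h0
    · rw [h0]
      simpa using mul_nonneg (norm_nonneg P) (hQpos y)
    have h1 := h (A y) y
    rw [inner_self_eq_norm_sq_to_K (𝕜 := ℂ)] at h1
    have h1' : (‖A y‖ ^ 2) ^ 2 ≤ (⟪A y, P (A y)⟫_ℂ).re * (⟪y, Q y⟫_ℂ).re := by
      simpa [norm_pow] using h1
    have h2 : (⟪A y, P (A y)⟫_ℂ).re ≤ ‖P‖ * ‖A y‖ ^ 2 := aux_re_le P (A y)
    have h3 : (‖A y‖ ^ 2) ^ 2 ≤ (‖P‖ * (⟪y, Q y⟫_ℂ).re) * ‖A y‖ ^ 2 := by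
      calc (‖A y‖ ^ 2) ^ 2 ≤ (⟪A y, P (A y)⟫_ℂ).re * (⟪y, Q y⟫_ℂ).re := h1'
        _ ≤ (‖P‖ * ‖A y‖ ^ 2) * (⟪y, Q y⟫_ℂ).re := mul_le_mul_of_nonneg_right h2 (hQpos y)
        _ = (‖P‖ * (⟪y, Q y⟫_ℂ).re) * ‖A y‖ ^ 2 := by ring
    have hpos : (0 : ℝ) < ‖A y‖ ^ 2 := pow_pos (norm_pos_iff.mpr h0) 2
    exact le_of_mul_le_mul_right (by simpa [pow_two] using h3) hpos
  -- key 2 : ‖A† x‖² ≤ ‖Q‖ * re⟪x, P x⟫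
  have key2 : ∀ x, ‖ContinuousLinearMap.adjoint A x‖ ^ 2 ≤ ‖Q‖ * (⟪x, P x⟫_ℂ).re := by
    intro x
    set z := ContinuousLinearMap.adjoint A x with hz
    rcases eq_or_ne z 0 with h0 | h0
    · rw [h0]
      simpa using mul_nonneg (norm_nonneg Q) (hPpos x)
    have h1 := h x z
    have hiz : ⟪x, A z⟫_ℂ = ⟪z, z⟫_ℂ := by
      rw [← ContinuousLinearMap.adjoint_inner_left]
    rw [hiz, inner_self_eq_norm_sq_to_K (𝕜 := ℂ)] at h1
    have h1' : (‖z‖ ^ 2) ^ 2 ≤ (⟪x, P x⟫_ℂ).re * (⟪z, Q z⟫_ℂ).re := by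
      simpa [norm_pow] using h1
    have h2 : (⟪z, Q z⟫_ℂ).re ≤ ‖Q‖ * ‖z‖ ^ 2 := aux_re_le Q z
    have h3 : (‖z‖ ^ 2) ^ 2 ≤ (‖Q‖ * (⟪x, P x⟫_ℂ).re) * ‖z‖ ^ 2 := by
      calc (‖z‖ ^ 2) ^ 2 ≤ (⟪x, P x⟫_ℂ).re * (⟪z, Q z⟫_ℂ).re := h1'
        _ ≤ (⟪x, P x⟫_ℂ).re * (‖Q‖ * ‖z‖ ^ 2) := mul_le_mul_of_nonneg_left h2 (hPpos x)
        _ = (‖Q‖ * (⟪x, P x⟫_ℂ).re) * ‖z‖ ^ 2 := by ring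
    have hpos : (0 : ℝ) < ‖z‖ ^ 2 := pow_pos (norm_pos_iff.mpr h0) 2
    exact le_of_mul_le_mul_right (by simpa [pow_two] using h3) hpos
  have hAA : IsSelfAdjoint (ContinuousLinearMap.adjoint A * A) := by
    rw [IsSelfAdjoint, star_mul]
    simp [ContinuousLinearMap.star_eq_adjoint, ContinuousLinearMap.adjoint_adjoint]
  have hAA' : IsSelfAdjoint (A * ContinuousLinearMap.adjoint A) := by
    rw [IsSelfAdjoint, star_mul]
    simp [ContinuousLinearMap.star_eq_adjoint, ContinuousLinearMap.adjoint_adjoint]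
  refine ⟨?_, ?_, ?_⟩
  · rw [ContinuousLinearMap.le_def]
    constructor
    · have hq := hQ.isSelfAdjoint
      rw [IsSelfAdjoint] at *
      rw [← ContinuousLinearMap.isSelfAdjoint_iff_isSymmetric, IsSelfAdjoint, star_sub, star_smul, hAA, hq]
      simp
    · intro y
      rw [ContinuousLinearMap.reApplyInnerSelf_apply]
      have e : (‖P‖ • Q - ContinuousLinearMap.adjoint A * A) y
          = ‖P‖ • Q y - ContinuousLinearMap.adjoint A (A y) := by
        simp [ContinuousLinearMap.sub_apply]
      rw [e, inner_sub_left, aux_inner_real_smul]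
      have e1 : ⟪ContinuousLinearMap.adjoint A (A y), y⟫_ℂ = ⟪A y, A y⟫_ℂ := by
        rw [ContinuousLinearMap.adjoint_inner_left]
      rw [e1, inner_self_eq_norm_sq_to_K (𝕜 := ℂ)]
      have e2 : (⟪Q y, y⟫_ℂ).re = (⟪y, Q y⟫_ℂ).re := by rw [← inner_conj_symm]; exact Complex.conj_re _
      have := key1 y
      simp only [RCLike.re_to_complex, map_sub, RCLike.re_ofReal_mul, ← RCLike.ofReal_pow, RCLike.ofReal_re, Complex.sub_re, Complex.re_ofReal_mul, ← Complex.ofReal_pow,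
        Complex.ofReal_re, e2]
      linarith
  · rw [ContinuousLinearMap.le_def]
    constructor
    · have hp := hP.isSelfAdjoint
      rw [IsSelfAdjoint] at *
      rw [← ContinuousLinearMap.isSelfAdjoint_iff_isSymmetric, IsSelfAdjoint, star_sub, star_smul, hAA', hp]
      simp
    · intro x
      rw [ContinuousLinearMap.reApplyInnerSelf_apply]
      have e : (‖Q‖ • P - A * ContinuousLinearMap.adjoint A) x
          = ‖Q‖ • P x - A (ContinuousLinearMap.adjoint A x) := by
        simp [ContinuousLinearMap.sub_apply]
      rw [e, inner_sub_left, aux_inner_real_smul]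
      have e1 : ⟪A (ContinuousLinearMap.adjoint A x), x⟫_ℂ
          = ⟪ContinuousLinearMap.adjoint A x, ContinuousLinearMap.adjoint A x⟫_ℂ := by
        rw [← ContinuousLinearMap.adjoint_inner_right]
      rw [e1, inner_self_eq_norm_sq_to_K (𝕜 := ℂ)]
      have e2 : (⟪P x, x⟫_ℂ).re = (⟪x, P x⟫_ℂ).re := by rw [← inner_conj_symm]; exact Complex.conj_re _
      have := key2 x
      simp only [RCLike.re_to_complex, map_sub, RCLike.re_ofReal_mul, ← RCLike.ofReal_pow, RCLike.ofReal_re, Complex.sub_re, Complex.re_ofReal_mul, ← Complex.ofReal_pow,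
        Complex.ofReal_re, e2]
      linarith
  · have hb : ∀ y, ‖A y‖ ≤ Real.sqrt (‖P‖ * ‖Q‖) * ‖y‖ := by
      intro y
      have h1 : ‖A y‖ ^ 2 ≤ (‖P‖ * ‖Q‖) * ‖y‖ ^ 2 := by
        calc ‖A y‖ ^ 2 ≤ ‖P‖ * (⟪y, Q y⟫_ℂ).re := key1 y
          _ ≤ ‖P‖ * (‖Q‖ * ‖y‖ ^ 2) :=
              mul_le_mul_of_nonneg_left (aux_re_le Q y) (norm_nonneg P)
          _ = (‖P‖ * ‖Q‖) * ‖y‖ ^ 2 := by ring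
      have := Real.sqrt_le_sqrt h1
      rwa [Real.sqrt_sq (norm_nonneg _), Real.sqrt_mul (by positivity),
        Real.sqrt_sq (norm_nonneg _)] at this
    have hnorm : ‖A‖ ≤ Real.sqrt (‖P‖ * ‖Q‖) :=
      A.opNorm_le_bound (Real.sqrt_nonneg _) hb
    calc ‖A‖ ^ 2 ≤ Real.sqrt (‖P‖ * ‖Q‖) ^ 2 := pow_le_pow_left₀ (norm_nonneg A) hnorm 2
      _ = ‖P‖ * ‖Q‖ := Real.sq_sqrt (by positivity)
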